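/- arXiv:2203.14623 — 3 statements merged into one kernel-verified Lean document; each statement's English description precedes it below -/
import Mathlib

section
/- Let x₁, x₃, I_d, I_q, y₁, y₂, y₃, y₄, R_s, x_q, x_d' be real numbers such that the stator algebraic equation i·x₃·exp(i(x₁ − π/2)) = (R_s + i·x_d')·y₃·exp(i·y₄) + y₁·exp(i·y₂) − (x_q − x_d')·I_q·exp(i(x₁ − π/2)) holds and the dq-decomposition relation (I_d + i·I_q)·exp(i(x₁ − π/2)) = y₃·exp(i·y₄) holds. Then ((x_q − x_d')·I_d + x₃)·exp(i·x₁) = ψ, where ψ := (R_s + i·x_q)·y₃·exp(i·y₄) + y₁·exp(i·y₂). -/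
open Complex Real

/-- From the stator algebraic equation and the dq-decomposition of the
terminal current, the phasor identity ((x_q − x_d')·I_d + x₃)·exp(i·x₁) = ψ follows,
where ψ = (R_s + i·x_q)·y₃·exp(i·y₄) + y₁·exp(i·y₂). -/
theorem stator_phasor_identity
    (x₁ x₃ I_d I_q y₁ y₂ y₃ y₄ R_s x_q x_d' : ℝ)
    (hstator : Complex.I * (x₃ : ℂ) * Complex.exp (Complex.I * ((x₁ : ℂ) - Real.pi / 2)) =
      ((R_s : ℂ) + Complex.I * (x_d' : ℂ)) * (y₃ : ℂ) * Complex.exp (Complex.I * (y₄ : ℂ)) +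
      (y₁ : ℂ) * Complex.exp (Complex.I * (y₂ : ℂ)) -
      ((x_q : ℂ) - (x_d' : ℂ)) * (I_q : ℂ) * Complex.exp (Complex.I * ((x₁ : ℂ) - Real.pi / 2)))
    (hdq : ((I_d : ℂ) + Complex.I * (I_q : ℂ)) *
      Complex.exp (Complex.I * ((x₁ : ℂ) - Real.pi / 2)) =
      (y₃ : ℂ) * Complex.exp (Complex.I * (y₄ : ℂ))) :
    (((x_q - x_d') * I_d + x₃ : ℝ) : ℂ) * Complex.exp (Complex.I * (x₁ : ℂ)) =
      ((R_s : ℂ) + Complex.I * (x_q : ℂ)) * (y₃ : ℂ) * Complex.exp (Complex.I * (y₄ : ℂ)) +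
      (y₁ : ℂ) * Complex.exp (Complex.I * (y₂ : ℂ)) := by
  have h2 : Complex.exp (Complex.I * (x₁ : ℂ)) =
      Complex.I * Complex.exp (Complex.I * ((x₁ : ℂ) - Real.pi / 2)) := by
    have hI : Complex.exp (Complex.I * ((Real.pi : ℂ) / 2)) = Complex.I := by
      rw [mul_comm, Complex.exp_mul_I, Complex.cos_pi_div_two, Complex.sin_pi_div_two]; ring
    nth_rewrite 2 [← hI]
    rw [← Complex.exp_add]
    congr 1
    ring
  rw [h2]
  push_cast
  linear_combination hstator + Complex.I * ((x_q : ℂ) - x_d') * hdq +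
    ((x_d' : ℂ) - x_q) * Complex.exp (Complex.I * ((x₁ : ℂ) - Real.pi / 2)) * I_q * Complex.I_sq
end

section
/- Fix real numbers y₁, y₂, y₃, y₄, R_s, x_q, x_d'. Suppose (x₁, x₃, I_d, I_q) and (x₁', x₃', I_d', I_q') are two tuples of real numbers, each satisfying the stator algebraic equation i·x₃·exp(i(x₁ − π/2)) = (R_s + i·x_d')·y₃·exp(i·y₄) + y₁·exp(i·y₂) − (x_q − x_d')·I_q·exp(i(x₁ − π/2)) together with the dq-decomposition relation (I_d + i·I_q)·exp(i(x₁ − π/2)) = y₃·exp(i·y₄) (respectively with primed variables), and each satisfying the positivity condition (x_q − x_d')·I_d + x₃ > 0 (respectively primed). Then x₃ = x₃' and x₁ ≡ x₁' modulo 2π (i.e., there exists an integer n with x₁ − x₁' = 2πn). -/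
open Complex Real

/-- Uniqueness in Lemma 1: two tuples (x₁, x₃, I_d, I_q) and
(x₁', x₃', I_d', I_q') satisfying the stator algebraic equation, the dq-decomposition
relation and the positivity condition (for the same measurements y₁, y₂, y₃, y₄ and
machine parameters R_s, x_q, x_d') have x₃ = x₃' and x₁ ≡ x₁' (mod 2π). -/
theorem lemma1_uniqueness
    (y₁ y₂ y₃ y₄ R_s x_q x_d' : ℝ)
    (x₁ x₃ I_d I_q x₁' x₃' I_d' I_q' : ℝ)
    (hstator : Complex.I * (x₃ : ℂ) * Complex.exp (Complex.I * ((x₁ : ℂ) - Real.pi / 2)) =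
      ((R_s : ℂ) + Complex.I * (x_d' : ℂ)) * (y₃ : ℂ) * Complex.exp (Complex.I * (y₄ : ℂ)) +
      (y₁ : ℂ) * Complex.exp (Complex.I * (y₂ : ℂ)) -
      ((x_q : ℂ) - (x_d' : ℂ)) * (I_q : ℂ) * Complex.exp (Complex.I * ((x₁ : ℂ) - Real.pi / 2)))
    (hdq : ((I_d : ℂ) + Complex.I * (I_q : ℂ)) *
      Complex.exp (Complex.I * ((x₁ : ℂ) - Real.pi / 2)) =
      (y₃ : ℂ) * Complex.exp (Complex.I * (y₄ : ℂ)))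
    (hpos : (x_q - x_d') * I_d + x₃ > 0)
    (hstator' : Complex.I * (x₃' : ℂ) * Complex.exp (Complex.I * ((x₁' : ℂ) - Real.pi / 2)) =
      ((R_s : ℂ) + Complex.I * (x_d' : ℂ)) * (y₃ : ℂ) * Complex.exp (Complex.I * (y₄ : ℂ)) +
      (y₁ : ℂ) * Complex.exp (Complex.I * (y₂ : ℂ)) -
      ((x_q : ℂ) - (x_d' : ℂ)) * (I_q' : ℂ) * Complex.exp (Complex.I * ((x₁' : ℂ) - Real.pi / 2)))
    (hdq' : ((I_d' : ℂ) + Complex.I * (I_q' : ℂ)) *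
      Complex.exp (Complex.I * ((x₁' : ℂ) - Real.pi / 2)) =
      (y₃ : ℂ) * Complex.exp (Complex.I * (y₄ : ℂ)))
    (hpos' : (x_q - x_d') * I_d' + x₃' > 0) :
    x₃ = x₃' ∧ ∃ n : ℤ, x₁ - x₁' = 2 * Real.pi * n := by
  set θ : ℂ := Complex.I * ((x₁ : ℂ) - Real.pi / 2) with hθ
  set θ' : ℂ := Complex.I * ((x₁' : ℂ) - Real.pi / 2) with hθ'
  set r : ℝ := (x_q - x_d') * I_d + x₃ with hr
  set r' : ℝ := (x_q - x_d') * I_d' + x₃' with hr'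
  have key : Complex.I * (r : ℂ) * Complex.exp θ = Complex.I * (r' : ℂ) * Complex.exp θ' := by
    push_cast [hr, hr']
    linear_combination hstator - hstator' + Complex.I * ((x_q : ℂ) - (x_d' : ℂ)) * hdq
      - Complex.I * ((x_q : ℂ) - (x_d' : ℂ)) * hdq'
      + ((x_q : ℂ) - (x_d' : ℂ)) * (Complex.exp θ' * (I_q' : ℂ) - Complex.exp θ * (I_q : ℂ)) * Complex.I_sq
  have habsθ : ‖Complex.exp θ‖ = 1 := by
    rw [Complex.norm_exp]; simp [hθ]
  have habsθ' : ‖Complex.exp θ'‖ = 1 := by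
    rw [Complex.norm_exp]; simp [hθ']
  have hrr : r = r' := by
    have := congrArg (‖·‖) key
    simp only [norm_mul, Complex.norm_I, Complex.norm_real, Real.norm_eq_abs, habsθ, habsθ', one_mul, mul_one] at this
    rwa [abs_of_pos hpos, abs_of_pos hpos'] at this
  have hexp : Complex.exp θ = Complex.exp θ' := by
    have hI : (Complex.I : ℂ) ≠ 0 := Complex.I_ne_zero
    have hrne : (r : ℂ) ≠ 0 := by exact_mod_cast hpos.ne'
    rw [hrr] at key
    have hne : Complex.I * (r' : ℂ) ≠ 0 :=
      mul_ne_zero Complex.I_ne_zero (by exact_mod_cast hpos'.ne')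
    exact mul_left_cancel₀ hne key
  have hexpne : Complex.exp θ ≠ 0 := Complex.exp_ne_zero _
  -- I_d = I_d'
  have hId : I_d = I_d' := by
    have h1 : ((I_d : ℂ) + Complex.I * (I_q : ℂ)) = ((I_d' : ℂ) + Complex.I * (I_q' : ℂ)) := by
      have := hdq.trans hdq'.symm
      rw [hexp] at this
      exact mul_right_cancel₀ (Complex.exp_ne_zero _) this
    have := congrArg Complex.re h1
    simpa using this
  constructor
  · have : (x_q - x_d') * I_d + x₃ = (x_q - x_d') * I_d' + x₃' := hrr
    rw [hId] at this; linarith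
  · obtain ⟨n, hn⟩ := Complex.exp_eq_exp_iff_exists_int.mp hexp
    refine ⟨n, ?_⟩
    have := congrArg Complex.im hn
    simp [hθ, hθ', Complex.ext_iff] at this
    linarith
end

section
/- Let k, θ₁, θ₂ be real numbers with θ₁ + k > 0, and let x₁, x₂, x₂ᴵ : [0, ∞) → ℝ be differentiable functions and θ̂₁, θ̂₂, u : [0, ∞) → ℝ be continuous functions such that for all t ≥ 0: x₁'(t) = x₂(t), x₂'(t) = −θ₁·x₂(t) + θ₂·u(t), and x₂ᴵ'(t) = −(θ̂₁(t) + k)·(x₂ᴵ(t) + k·x₁(t)) + θ̂₂(t)·u(t). Assume that x₂ and u are bounded on [0, ∞) and that θ̂₁(t) → θ₁ and θ̂₂(t) → θ₂ as t → ∞. Define x̂₂(t) := x₂ᴵ(t) + k·x₁(t). Then x̂₂(t) − x₂(t) → 0 as t → ∞. -/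
open Real Filter

/-- State-observation conclusion of Lemma 2: if the parameter estimates
θ̂₁, θ̂₂ converge to the true parameters θ₁, θ₂ (with θ₁ + k > 0), and x₂ and u are
bounded, then the I&I adaptive observer state estimate x̂₂ = x₂ᴵ + k·x₁ converges to
the plant state x₂. -/
theorem ii_observer_state_convergence
    (k θ₁ θ₂ : ℝ) (hk : 0 < θ₁ + k)
    (x₁ x₂ x₂I θh₁ θh₂ u : ℝ → ℝ)
    (hθh₁c : ContinuousOn θh₁ (Set.Ici (0 : ℝ)))
    (hθh₂c : ContinuousOn θh₂ (Set.Ici (0 : ℝ)))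
    (huc : ContinuousOn u (Set.Ici (0 : ℝ)))
    (hx₁ : ∀ t ∈ Set.Ici (0 : ℝ), HasDerivAt x₁ (x₂ t) t)
    (hx₂ : ∀ t ∈ Set.Ici (0 : ℝ), HasDerivAt x₂ (-θ₁ * x₂ t + θ₂ * u t) t)
    (hx₂I : ∀ t ∈ Set.Ici (0 : ℝ), HasDerivAt x₂I
      (-(θh₁ t + k) * (x₂I t + k * x₁ t) + θh₂ t * u t) t)
    (hx₂bdd : ∃ M : ℝ, ∀ t ∈ Set.Ici (0 : ℝ), |x₂ t| ≤ M)
    (hubdd : ∃ M : ℝ, ∀ t ∈ Set.Ici (0 : ℝ), |u t| ≤ M)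
    (hθh₁ : Tendsto θh₁ atTop (nhds θ₁))
    (hθh₂ : Tendsto θh₂ atTop (nhds θ₂)) :
    Tendsto (fun t => (x₂I t + k * x₁ t) - x₂ t) atTop (nhds 0) := by
  obtain ⟨M, hM⟩ := hx₂bdd
  obtain ⟨N, hN⟩ := hubdd
  have hM0 : 0 ≤ M := le_trans (abs_nonneg _) (hM 0 Set.self_mem_Ici)
  have hN0 : 0 ≤ N := le_trans (abs_nonneg _) (hN 0 Set.self_mem_Ici)
  set c : ℝ := (θ₁ + k) / 2 with hcdef
  have hc0 : 0 < c := by positivity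
  -- the retraction onto [0, ∞)
  set p : ℝ → ℝ := fun s => max s 0 with hpdef
  have hpc : Continuous p := continuous_id.max continuous_const
  have hpmem : ∀ s, p s ∈ Set.Ici (0 : ℝ) := fun s => le_max_right s 0
  have hpeq : ∀ s ∈ Set.Ici (0 : ℝ), p s = s := fun s hs => max_eq_left hs
  have hptend : Tendsto p atTop atTop :=
    tendsto_atTop_mono (fun s => le_max_left s 0) tendsto_id
  -- continuity of the data
  have hx₂c : ContinuousOn x₂ (Set.Ici (0 : ℝ)) :=
    fun t ht => (hx₂ t ht).continuousAt.continuousWithinAt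
  -- globally continuous versions of the coefficient and the disturbance
  set a : ℝ → ℝ := fun s => θh₁ (p s) + k with hadef
  have hac : Continuous a := (hθh₁c.comp_continuous hpc hpmem).add continuous_const
  set d : ℝ → ℝ := fun s =>
    (θ₁ - θh₁ (p s)) * x₂ (p s) + (θh₂ (p s) - θ₂) * u (p s) with hddef
  have hdc : Continuous d :=
    ((continuous_const.sub (hθh₁c.comp_continuous hpc hpmem)).mul
      (hx₂c.comp_continuous hpc hpmem)).add
      (((hθh₂c.comp_continuous hpc hpmem).sub continuous_const).mul
        (huc.comp_continuous hpc hpmem))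
  set e : ℝ → ℝ := fun t => x₂I t + k * x₁ t - x₂ t with hedef
  set B : ℝ → ℝ := fun t => ∫ s in (0:ℝ)..t, a s with hBdef
  have hBderiv : ∀ t : ℝ, HasDerivAt B (a t) t := fun t =>
    intervalIntegral.integral_hasDerivAt_right (hac.intervalIntegrable _ _)
      (hac.stronglyMeasurableAtFilter _ _) hac.continuousAt
  have hBd : Differentiable ℝ B := fun t => (hBderiv t).differentiableAt
  have hBc : Continuous B := hBd.continuous
  have hBdiff : ∀ s t : ℝ, B t - B s = ∫ x in s..t, a x := by
    intro s t
    rw [hBdef]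
    simp only
    rw [← intervalIntegral.integral_add_adjacent_intervals
      (hac.intervalIntegrable 0 s) (hac.intervalIntegrable s t)]
    ring
  -- derivative of the error
  have hederiv : ∀ t ∈ Set.Ici (0 : ℝ), HasDerivAt e (-a t * e t + d t) t := by
    intro t ht
    have h := ((hx₂I t ht).add ((hx₁ t ht).const_mul k)).sub (hx₂ t ht)
    refine h.congr_deriv ?_
    simp only [hadef, hddef, hedef, hpeq t ht]
    ring
  -- derivative of e * exp B
  have hgderiv : ∀ t ∈ Set.Ici (0 : ℝ),
      HasDerivAt (fun t => e t * Real.exp (B t)) (d t * Real.exp (B t)) t := by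
    intro t ht
    have h := (hederiv t ht).mul ((hBderiv t).exp)
    refine h.congr_deriv ?_
    ring
  have hintc : Continuous fun s => d s * Real.exp (B s) :=
    hdc.mul (Real.continuous_exp.comp hBc)
  -- FTC representation
  have key : ∀ T t : ℝ, 0 ≤ T → T ≤ t →
      e t * Real.exp (B t) - e T * Real.exp (B T) = ∫ s in T..t, d s * Real.exp (B s) := by
    intro T t hT hTt
    refine (intervalIntegral.integral_eq_sub_of_hasDerivAt
      (f := fun t => e t * Real.exp (B t)) (f' := fun s => d s * Real.exp (B s))
      (fun s hs => ?_) (hintc.intervalIntegrable _ _)).symm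
    rw [Set.uIcc_of_le hTt] at hs
    exact hgderiv s (le_trans hT hs.1)
  -- now the limit
  rw [Metric.tendsto_atTop]
  intro ε hε
  set ε' : ℝ := c * ε / 4 with hε'def
  have hε'0 : 0 < ε' := by positivity
  -- eventual smallness of the disturbance and positivity of the coefficient
  have h1 : ∀ᶠ t in atTop, c ≤ a t := by
    have ha_tend : Tendsto a atTop (nhds (θ₁ + k)) := by
      have := (hθh₁.comp hptend).add_const k
      simpa [hadef, Function.comp] using this
    exact ha_tend.eventually (eventually_ge_nhds (by linarith))
  have h2 : ∀ᶠ t in atTop, |θh₁ (p t) - θ₁| < ε' / (2 * (M + 1)) := by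
    have := (hθh₁.comp hptend)
    have := Metric.tendsto_nhds.mp this (ε' / (2 * (M + 1))) (by positivity)
    simpa [Function.comp, Real.dist_eq] using this
  have h3 : ∀ᶠ t in atTop, |θh₂ (p t) - θ₂| < ε' / (2 * (N + 1)) := by
    have := (hθh₂.comp hptend)
    have := Metric.tendsto_nhds.mp this (ε' / (2 * (N + 1))) (by positivity)
    simpa [Function.comp, Real.dist_eq] using this
  obtain ⟨T₀, hT₀⟩ := eventually_atTop.mp ((h1.and h2).and h3)
  set T : ℝ := max T₀ 0 with hTdef
  have hT0 : (0:ℝ) ≤ T := le_max_right _ _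
  have haT : ∀ s, T ≤ s → c ≤ a s := fun s hs =>
    ((hT₀ s (le_trans (le_max_left _ _) hs)).1).1
  have hdT : ∀ s, T ≤ s → |d s| ≤ ε' := by
    intro s hs
    have h₂ := ((hT₀ s (le_trans (le_max_left _ _) hs)).1).2
    have h₃ := (hT₀ s (le_trans (le_max_left _ _) hs)).2
    have hx : |x₂ (p s)| ≤ M := hM _ (hpmem s)
    have hu : |u (p s)| ≤ N := hN _ (hpmem s)
    have habs1 : |(θ₁ - θh₁ (p s)) * x₂ (p s)| ≤ ε' / (2 * (M + 1)) * M := by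
      rw [abs_mul]
      have : |θ₁ - θh₁ (p s)| ≤ ε' / (2 * (M + 1)) := by
        rw [abs_sub_comm]; exact le_of_lt h₂
      exact mul_le_mul this hx (abs_nonneg _) (by positivity)
    have habs2 : |(θh₂ (p s) - θ₂) * u (p s)| ≤ ε' / (2 * (N + 1)) * N := by
      rw [abs_mul]
      exact mul_le_mul (le_of_lt h₃) hu (abs_nonneg _) (by positivity)
    have hb1 : ε' / (2 * (M + 1)) * M ≤ ε' / 2 := by
      rw [div_mul_eq_mul_div, div_le_div_iff₀ (by positivity) (by norm_num)]
      nlinarith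
    have hb2 : ε' / (2 * (N + 1)) * N ≤ ε' / 2 := by
      rw [div_mul_eq_mul_div, div_le_div_iff₀ (by positivity) (by norm_num)]
      nlinarith
    calc |d s| ≤ |(θ₁ - θh₁ (p s)) * x₂ (p s)| + |(θh₂ (p s) - θ₂) * u (p s)| :=
          abs_add_le _ _
      _ ≤ ε' / 2 + ε' / 2 := add_le_add (le_trans habs1 hb1) (le_trans habs2 hb2)
      _ = ε' := by ring
  -- lower bound on B-increments
  have hBlow : ∀ s t : ℝ, T ≤ s → s ≤ t → c * (t - s) ≤ B t - B s := by
    intro s t hs hst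
    rw [hBdiff, mul_comm]
    calc (t - s) * c = ∫ _x in s..t, c := by
          simp only [intervalIntegral.integral_const, smul_eq_mul]
      _ ≤ ∫ x in s..t, a x :=
        intervalIntegral.integral_mono_on hst intervalIntegrable_const
          (hac.intervalIntegrable _ _) (fun x hx => haT x (le_trans hs hx.1))
  -- the main bound for t ≥ T
  have main : ∀ t : ℝ, T ≤ t → |e t| ≤ |e T| * Real.exp (-(c * (t - T))) + ε / 4 := by
    intro t ht
    have hrep := key T t hT0 ht
    have het : e t = (e T * Real.exp (B T) + ∫ s in T..t, d s * Real.exp (B s)) *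
        Real.exp (-(B t)) := by
      have hne : Real.exp (B t) ≠ 0 := (Real.exp_pos _).ne'
      rw [Real.exp_neg]
      field_simp
      linarith [hrep]
    -- bound the integral
    have hintbd : |∫ s in T..t, d s * Real.exp (B s)| ≤
        ε' * Real.exp (B t - c * t) * ((Real.exp (c * t) - Real.exp (c * T)) / c) := by
      have step1 : |∫ s in T..t, d s * Real.exp (B s)| ≤
          ∫ s in T..t, |d s * Real.exp (B s)| :=
        intervalIntegral.abs_integral_le_integral_abs ht
      have step2 : (∫ s in T..t, |d s * Real.exp (B s)|) ≤
          ∫ s in T..t, ε' * Real.exp (B t - c * t) * Real.exp (c * s) := by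
        refine intervalIntegral.integral_mono_on ht
          (hintc.abs.intervalIntegrable _ _)
          ((continuous_const.mul (Real.continuous_exp.comp
            (continuous_const.mul continuous_id))).intervalIntegrable _ _)
          (fun s hs => ?_)
        have hB1 : B s ≤ B t - c * (t - s) := by
          have := hBlow s t hs.1 hs.2
          linarith
        have hexp : Real.exp (B s) ≤ Real.exp (B t - c * t) * Real.exp (c * s) := by
          rw [← Real.exp_add]
          exact Real.exp_le_exp.mpr (by linarith)
        rw [abs_mul, abs_of_pos (Real.exp_pos _)]
        calc |d s| * Real.exp (B s) ≤ ε' * (Real.exp (B t - c * t) * Real.exp (c * s)) :=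
              mul_le_mul (hdT s hs.1) hexp (le_of_lt (Real.exp_pos _)) (le_of_lt hε'0)
          _ = ε' * Real.exp (B t - c * t) * Real.exp (c * s) := by ring
      have step3 : (∫ s in T..t, ε' * Real.exp (B t - c * t) * Real.exp (c * s)) =
          ε' * Real.exp (B t - c * t) * ((Real.exp (c * t) - Real.exp (c * T)) / c) := by
        rw [intervalIntegral.integral_const_mul]
        congr 1
        have hanti : ∀ s ∈ Set.uIcc T t,
            HasDerivAt (fun s => Real.exp (c * s) / c) (Real.exp (c * s)) s := by
          intro s _
          have h := ((hasDerivAt_id s).const_mul c).exp.div_const c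
          refine h.congr_deriv ?_
          field_simp
          rfl
        rw [intervalIntegral.integral_eq_sub_of_hasDerivAt hanti
          ((Real.continuous_exp.comp (continuous_const.mul continuous_id)).intervalIntegrable _ _)]
        field_simp
      calc |∫ s in T..t, d s * Real.exp (B s)| ≤
            ∫ s in T..t, |d s * Real.exp (B s)| := step1
        _ ≤ ∫ s in T..t, ε' * Real.exp (B t - c * t) * Real.exp (c * s) := step2
        _ = ε' * Real.exp (B t - c * t) * ((Real.exp (c * t) - Real.exp (c * T)) / c) := step3
    -- put things together
    have hexpBt : (0:ℝ) < Real.exp (-(B t)) := Real.exp_pos _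
    have h1 : |e t| ≤ (|e T| * Real.exp (B T) + |∫ s in T..t, d s * Real.exp (B s)|) *
        Real.exp (-(B t)) := by
      rw [het, abs_mul, abs_of_pos hexpBt]
      gcongr
      calc |e T * Real.exp (B T) + ∫ s in T..t, d s * Real.exp (B s)| ≤
            |e T * Real.exp (B T)| + |∫ s in T..t, d s * Real.exp (B s)| := abs_add_le _ _
        _ = |e T| * Real.exp (B T) + |∫ s in T..t, d s * Real.exp (B s)| := by
            rw [abs_mul, abs_of_pos (Real.exp_pos _)]
    have term1 : |e T| * Real.exp (B T) * Real.exp (-(B t)) ≤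
        |e T| * Real.exp (-(c * (t - T))) := by
      rw [mul_assoc, ← Real.exp_add]
      have := hBlow T t le_rfl ht
      exact mul_le_mul_of_nonneg_left (Real.exp_le_exp.mpr (by linarith)) (abs_nonneg _)
    have term2 : ε' * Real.exp (B t - c * t) * ((Real.exp (c * t) - Real.exp (c * T)) / c) *
        Real.exp (-(B t)) ≤ ε / 4 := by
      have hkey : Real.exp (B t - c * t) * Real.exp (-(B t)) = Real.exp (-(c * t)) := by
        rw [← Real.exp_add]; congr 1; ring
      have hexple : Real.exp (c * t) - Real.exp (c * T) ≤ Real.exp (c * t) := by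
        linarith [Real.exp_pos (c * T)]
      have hpos2 : (0:ℝ) ≤ Real.exp (c * t) - Real.exp (c * T) :=
        sub_nonneg.mpr (Real.exp_le_exp.mpr (by nlinarith))
      calc ε' * Real.exp (B t - c * t) * ((Real.exp (c * t) - Real.exp (c * T)) / c) *
            Real.exp (-(B t))
          = ε' / c * ((Real.exp (c * t) - Real.exp (c * T)) * Real.exp (-(c * t))) := by
            rw [← hkey]; ring
        _ ≤ ε' / c * (Real.exp (c * t) * Real.exp (-(c * t))) := by
            gcongr
        _ = ε' / c := by rw [← Real.exp_add]; simp
        _ = ε / 4 := by rw [hε'def]; field_simp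
    calc |e t| ≤ (|e T| * Real.exp (B T) + |∫ s in T..t, d s * Real.exp (B s)|) *
          Real.exp (-(B t)) := h1
      _ = |e T| * Real.exp (B T) * Real.exp (-(B t)) +
          |∫ s in T..t, d s * Real.exp (B s)| * Real.exp (-(B t)) := by ring
      _ ≤ |e T| * Real.exp (-(c * (t - T))) + ε / 4 := by
          refine add_le_add term1 ?_
          calc |∫ s in T..t, d s * Real.exp (B s)| * Real.exp (-(B t)) ≤
                ε' * Real.exp (B t - c * t) * ((Real.exp (c * t) - Real.exp (c * T)) / c) *
                  Real.exp (-(B t)) := by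
                exact mul_le_mul_of_nonneg_right hintbd (le_of_lt hexpBt)
            _ ≤ ε / 4 := term2
  -- the decaying term eventually gets small
  have hdecay : Tendsto (fun t => |e T| * Real.exp (-(c * (t - T)))) atTop (nhds 0) := by
    have h1 : Tendsto (fun t : ℝ => c * (t - T)) atTop atTop :=
      (tendsto_atTop_add_const_right _ (-T) tendsto_id).const_mul_atTop hc0
    have h2 : Tendsto (fun t : ℝ => Real.exp (-(c * (t - T)))) atTop (nhds 0) :=
      Real.tendsto_exp_neg_atTop_nhds_zero.comp h1
    simpa using h2.const_mul (|e T|)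
  have hev : ∀ᶠ t in atTop, |e T| * Real.exp (-(c * (t - T))) < ε / 2 :=
    hdecay.eventually (gt_mem_nhds (by positivity))
  obtain ⟨T₁, hT₁⟩ := eventually_atTop.mp hev
  refine ⟨max T T₁, fun t htt => ?_⟩
  have ht1 : T ≤ t := le_trans (le_max_left _ _) htt
  have ht2 : T₁ ≤ t := le_trans (le_max_right _ _) htt
  have := main t ht1
  have := hT₁ t ht2
  rw [Real.dist_eq, sub_zero]
  show |e t| < ε
  linarith
end
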